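/- Let p be a degree 4 polynomial with four distinct real roots and ratio vector (u,v,w) (with σ_1 = u, σ_2 = v, σ_3 = w). Then 1/(4(1-u)) < v < 1/(4(1-u)w). -/

import Mathlib

open Polynomial

set_option maxHeartbeats 1600000 in
theorem ratio_v_bounds (r₁ r₂ r₃ r₄ x₁ x₂ x₃ u v w : ℝ)
    (hr12 : r₁ < r₂) (hr23 : r₂ < r₃) (hr34 : r₃ < r₄)
    (hx12 : x₁ < x₂) (hx23 : x₂ < x₃)
    (p : Polynomial ℝ)
    (hp : p = (X - C r₁) * (X - C r₂) * (X - C r₃) * (X - C r₄))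
    (hc1 : p.derivative.eval x₁ = 0) (hc2 : p.derivative.eval x₂ = 0)
    (hc3 : p.derivative.eval x₃ = 0)
    (hu : u = (x₁ - r₁) / (r₂ - r₁)) (hv : v = (x₂ - r₂) / (r₃ - r₂))
    (hw : w = (x₃ - r₃) / (r₄ - r₃)) :
    1 / (4 * (1 - u)) < v ∧ v < 1 / (4 * (1 - u) * w) := by
  -- explicit derivative
  have hd : p.derivative = C 4 * X^3 - C 3 * (C r₁ + C r₂ + C r₃ + C r₄) * X^2
      + C 2 * (C r₁*C r₂ + C r₁*C r₃ + C r₁*C r₄ + C r₂*C r₃ + C r₂*C r₄ + C r₃*C r₄)*X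
      - (C r₁*C r₂*C r₃ + C r₁*C r₂*C r₄ + C r₁*C r₃*C r₄ + C r₂*C r₃*C r₄) := by
    have hpe : p = X^4 - (C r₁ + C r₂ + C r₃ + C r₄) * X^3
        + (C r₁*C r₂ + C r₁*C r₃ + C r₁*C r₄ + C r₂*C r₃ + C r₂*C r₄ + C r₃*C r₄)*X^2
        - (C r₁*C r₂*C r₃ + C r₁*C r₂*C r₄ + C r₁*C r₃*C r₄ + C r₂*C r₃*C r₄)*X
        + C r₁*C r₂*C r₃*C r₄ := by rw [hp]; ring
    rw [hpe]
    simp only [derivative_add, derivative_sub, derivative_mul, derivative_X_pow, derivative_C,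
      derivative_X]
    ring_nf
  -- the difference q has degree ≤ 2 and three distinct roots, hence is 0
  set q : Polynomial ℝ :=
    p.derivative - C 4 * ((X - C x₁) * (X - C x₂) * (X - C x₃)) with hqdef
  have hq : q = C (4*(x₁+x₂+x₃) - 3*(r₁+r₂+r₃+r₄)) * X^2
      + C (2*(r₁*r₂+r₁*r₃+r₁*r₄+r₂*r₃+r₂*r₄+r₃*r₄) - 4*(x₁*x₂+x₁*x₃+x₂*x₃)) * X
      + C (4*(x₁*x₂*x₃) - (r₁*r₂*r₃+r₁*r₂*r₄+r₁*r₃*r₄+r₂*r₃*r₄)) := by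
    rw [hqdef, hd]
    simp only [C_add, C_sub, C_mul]
    ring
  have hqdeg : q.natDegree ≤ 2 := by rw [hq]; compute_degree
  have hqe1 : q.eval x₁ = 0 := by simp [hqdef, hc1]
  have hqe2 : q.eval x₂ = 0 := by simp [hqdef, hc2]
  have hqe3 : q.eval x₃ = 0 := by simp [hqdef, hc3]
  have hq0 : q = 0 := by
    by_contra hne
    have hsub : ({x₁, x₂, x₃} : Finset ℝ) ⊆ q.roots.toFinset := by
      intro x hx
      simp only [Finset.mem_insert, Finset.mem_singleton] at hx
      rw [Multiset.mem_toFinset, mem_roots hne]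
      rcases hx with rfl | rfl | rfl <;> assumption
    have hcard : ({x₁, x₂, x₃} : Finset ℝ).card = 3 :=
      Finset.card_eq_three.mpr ⟨x₁, x₂, x₃, by intro h; linarith, by intro h; linarith,
        by intro h; linarith, rfl⟩
    have h1 := Finset.card_le_card hsub
    have h2 := q.roots.toFinset_card_le
    have h3 := q.card_roots'
    omega
  have hfac : p.derivative = C 4 * ((X - C x₁) * (X - C x₂) * (X - C x₃)) :=
    sub_eq_zero.mp hq0
  -- roots of derivative are exactly x₁, x₂, x₃
  have hroots : ∀ y : ℝ, p.derivative.eval y = 0 → y = x₁ ∨ y = x₂ ∨ y = x₃ := by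
    intro y hy
    rw [hfac] at hy
    simp only [eval_mul, eval_sub, eval_X, eval_C, eval_ofNat] at hy
    have := mul_eq_zero.mp hy
    rcases this with h | h
    · norm_num at h
    · rcases mul_eq_zero.mp h with h' | h'
      · rcases mul_eq_zero.mp h' with h'' | h''
        · left; linarith [sub_eq_zero.mp h'']
        · right; left; linarith [sub_eq_zero.mp h'']
      · right; right; linarith [sub_eq_zero.mp h']
  -- Rolle: critical points in each gap
  have rolle : ∀ a b : ℝ, a < b → p.eval a = 0 → p.eval b = 0 →
      ∃ y ∈ Set.Ioo a b, p.derivative.eval y = 0 := by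
    intro a b hab ha hb
    obtain ⟨y, hy, hy'⟩ := exists_deriv_eq_zero hab p.continuousOn (ha.trans hb.symm)
    exact ⟨y, hy, by rwa [p.deriv] at hy'⟩
  have hev : ∀ t ∈ ({r₁, r₂, r₃, r₄} : Set ℝ), p.eval t = 0 := by
    intro t ht
    rcases ht with rfl | rfl | rfl | rfl <;> simp [hp]
  obtain ⟨y₁, hy1, hy1'⟩ := rolle r₁ r₂ hr12 (hev r₁ (by simp)) (hev r₂ (by simp))
  obtain ⟨y₂, hy2, hy2'⟩ := rolle r₂ r₃ hr23 (hev r₂ (by simp)) (hev r₃ (by simp))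
  obtain ⟨y₃, hy3, hy3'⟩ := rolle r₃ r₄ hr34 (hev r₃ (by simp)) (hev r₄ (by simp))
  obtain ⟨hy1l, hy1r⟩ := hy1
  obtain ⟨hy2l, hy2r⟩ := hy2
  obtain ⟨hy3l, hy3r⟩ := hy3
  have e1 := hroots y₁ hy1'
  have e2 := hroots y₂ hy2'
  have e3 := hroots y₃ hy3'
  -- interlacing
  have hkey : x₁ = y₁ ∧ x₂ = y₂ ∧ x₃ = y₃ := by
    rcases e1 with h1 | h1 | h1 <;> rcases e2 with h2 | h2 | h2 <;>
      rcases e3 with h3 | h3 | h3 <;>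
      first
        | exact ⟨h1.symm, h2.symm, h3.symm⟩
        | (exfalso; linarith)
  obtain ⟨k1, k2, k3⟩ := hkey
  have hi1 : r₁ < x₁ := by rw [k1]; exact hy1l
  have hi2 : x₁ < r₂ := by rw [k1]; exact hy1r
  have hi3 : r₂ < x₂ := by rw [k2]; exact hy2l
  have hi4 : x₂ < r₃ := by rw [k2]; exact hy2r
  have hi5 : r₃ < x₃ := by rw [k3]; exact hy3l
  have hi6 : x₃ < r₄ := by rw [k3]; exact hy3r
  -- key identity: evaluate derivative at r₂ two ways
  have hE1 : p.derivative.eval r₂ = 4*(r₂-x₁)*(r₂-x₂)*(r₂-x₃) := by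
    rw [hfac]; simp; ring
  have hE2 : p.derivative.eval r₂ = (r₂-r₁)*(r₂-r₃)*(r₂-r₄) := by
    rw [hp]
    simp only [derivative_mul, derivative_sub, derivative_X, derivative_C, eval_mul, eval_add,
      eval_sub, eval_X, eval_C, eval_one, eval_zero, derivative_one]
    ring
  have E : 4*(r₂-x₁)*(x₂-r₂)*(x₃-r₂) = (r₂-r₁)*(r₃-r₂)*(r₄-r₂) := by
    linear_combination hE1.symm.trans hE2
  clear hd hq hqdef hqe1 hqe2 hqe3 hq0 hfac hroots hc1 hc2 hc3 hp hE1 hE2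
  clear hy1' hy2' hy3' e1 e2 e3 k1 k2 k3 hy1l hy1r hy2l hy2r hy3l hy3r
  -- positivity facts
  have hA : (0:ℝ) < r₂ - r₁ := by linarith
  have hB : (0:ℝ) < r₃ - r₂ := by linarith
  have hCc : (0:ℝ) < r₄ - r₃ := by linarith
  have ha : (0:ℝ) < r₂ - x₁ := by linarith
  have hb : (0:ℝ) < x₂ - r₂ := by linarith
  have hcc : (0:ℝ) < x₃ - r₃ := by linarith
  have hx3r2 : (0:ℝ) < x₃ - r₂ := by linarith
  have hr4x3 : (0:ℝ) < r₄ - x₃ := by linarith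
  -- key inequalities
  have key1 : (r₂-r₁)*(r₃-r₂) < 4*(r₂-x₁)*(x₂-r₂) := by
    have h1 : (4*(r₂-x₁)*(x₂-r₂) - (r₂-r₁)*(r₃-r₂)) * (x₃-r₂)
        = (r₂-r₁)*(r₃-r₂)*(r₄-x₃) := by linear_combination E
    have hpos : 0 < (r₂-r₁)*(r₃-r₂)*(r₄-x₃) := mul_pos (mul_pos hA hB) hr4x3
    nlinarith [h1, hpos, hx3r2]
  have key2 : 4*(r₂-x₁)*(x₂-r₂)*(x₃-r₃) < (r₂-r₁)*(r₃-r₂)*(r₄-r₃) := by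
    have h2 : ((r₂-r₁)*(r₃-r₂)*(r₄-r₃) - 4*(r₂-x₁)*(x₂-r₂)*(x₃-r₃)) * (x₃-r₂)
        = (r₂-r₁)*(r₃-r₂)*((r₄-x₃)*(r₃-r₂)) := by linear_combination (r₃ - x₃) * E
    have hpos : 0 < (r₂-r₁)*(r₃-r₂)*((r₄-x₃)*(r₃-r₂)) :=
      mul_pos (mul_pos hA hB) (mul_pos hr4x3 hB)
    nlinarith [h2, hpos, hx3r2]
  have h1u : 1 - u = (r₂ - x₁) / (r₂ - r₁) := by
    rw [hu]; field_simp; ring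
  have hd1 : 0 < (r₂ - x₁) / (r₂ - r₁) := div_pos ha hA
  have hd2 : 0 < (x₃ - r₃) / (r₄ - r₃) := div_pos hcc hCc
  have e1u : 1 / (4 * (1 - u)) = (r₂ - r₁) / (4 * (r₂ - x₁)) := by
    rw [h1u, div_eq_div_iff (by linarith) (by positivity)]
    field_simp
  constructor
  · rw [e1u, hv, div_lt_div_iff₀ (by positivity) hB]
    nlinarith [key1]
  · have e2u : 1 / (4 * (1 - u) * w)
        = ((r₂ - r₁) * (r₄ - r₃)) / (4 * (r₂ - x₁) * (x₃ - r₃)) := by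
      rw [h1u, hw, div_eq_div_iff (by nlinarith [mul_pos hd1 hd2]) (by positivity)]
      field_simp
    rw [e2u, hv, div_lt_div_iff₀ hB (by positivity)]
    nlinarith [key2]
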